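/- Let Ψ be Pareto distributed with shape α > 2 and scale v = ((α−1)/α)·rn, r, n > 0, and let i, p > 0, g ≥ 0. Then B(c) = rn·(g+p) − p·c + (i+p)·∫_v^c (c − ψ)·α·vᵃ/ψ^{α+1} dψ, for c ≥ v, equals (g − i)·rn + (i + p)·((α−1)^{α−1}/αᵃ)·(rn)ᵃ·c^{1−α} + i·c, and is minimized over c ≥ v at c* = ((i+p)/i)^{1/α}·((α−1)/α)·rn with minimum value [g − i + i·((i+p)/i)^{1/α}]·rn. -/

import Mathlib

open Real

lemma bern (α t : ℝ) (hα : 1 < α) (ht : 0 < t) : α ≤ t ^ (1 - α) + (α - 1) * t := by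
  have hα0 : (0:ℝ) < α := by linarith
  have h := Real.geom_mean_le_arith_mean2_weighted
    (by positivity : (0:ℝ) ≤ 1/α) (div_nonneg (by linarith) hα0.le : (0:ℝ) ≤ (α-1)/α)
    (by norm_num : (0:ℝ) ≤ 1) (by positivity : (0:ℝ) ≤ t ^ α)
    (by field_simp; ring)
  rw [Real.one_rpow, one_mul, mul_one, ← Real.rpow_mul ht.le,
    show α * ((α-1)/α) = α - 1 by field_simp] at h
  have hsimp : α * (1/α + (α-1)/α * t^α) = 1 + (α-1)*t^α := by field_simp
  have h2 : α * t ^ (α - 1) ≤ 1 + (α - 1) * t ^ α := by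
    have := mul_le_mul_of_nonneg_left h hα0.le
    linarith [hsimp ▸ this]
  have e1 : t ^ (α - 1) * t ^ (1 - α) = 1 := by
    rw [← Real.rpow_add ht]; norm_num
  have e2 : t ^ α * t ^ (1 - α) = t := by
    rw [← Real.rpow_add ht]; norm_num
  have h3 := mul_le_mul_of_nonneg_right h2 (Real.rpow_pos_of_pos ht (1-α)).le
  nlinarith [h3, e1, e2]

lemma pareto_integral (α v c : ℝ) (hα : 1 < α) (hv : 0 < v) (hc : v ≤ c) :
    (∫ ψ in v..c, (c - ψ) * (α * v ^ α / ψ ^ (α + 1))) =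
      c + v ^ α * c ^ (1 - α) / (α - 1) - α * v / (α - 1) := by
  have hc0 : 0 < c := lt_of_lt_of_le hv hc
  set F : ℝ → ℝ := fun ψ => -(c * v ^ α * ψ ^ (-α)) - α * v ^ α * ψ ^ (1 - α) / (1 - α)
    with hF
  have key : ∀ ψ ∈ Set.uIcc v c, HasDerivAt F ((c - ψ) * (α * v ^ α / ψ ^ (α + 1))) ψ := by
    intro ψ hψ
    rw [Set.uIcc_of_le hc] at hψ
    have hψ0 : 0 < ψ := lt_of_lt_of_le hv hψ.1
    have h1 : HasDerivAt (fun x : ℝ => x ^ (-α)) (-α * ψ ^ (-α - 1)) ψ :=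
      Real.hasDerivAt_rpow_const (Or.inl hψ0.ne')
    have h2 : HasDerivAt (fun x : ℝ => x ^ (1 - α)) ((1 - α) * ψ ^ (1 - α - 1)) ψ :=
      Real.hasDerivAt_rpow_const (Or.inl hψ0.ne')
    have := (((h1.const_mul (c * v ^ α)).neg).sub
      (((h2.const_mul (α * v ^ α)).div_const (1 - α))))
    refine this.congr_deriv ?_
    have e1 : ψ ^ (α + 1) = ψ ^ α * ψ := by
      rw [Real.rpow_add hψ0, Real.rpow_one]
    have e2 : ψ ^ (-α - 1) = (ψ ^ α * ψ)⁻¹ := by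
      rw [← e1, ← Real.rpow_neg hψ0.le]; ring_nf
    have e3 : ψ ^ (1 - α - 1) = (ψ ^ α)⁻¹ := by
      rw [← Real.rpow_neg hψ0.le]; ring_nf
    have hψα : (0:ℝ) < ψ ^ α := Real.rpow_pos_of_pos hψ0 _
    rw [e1, e2, e3]
    have h1α : (1:ℝ) - α ≠ 0 := by nlinarith
    field_simp
  have hint : IntervalIntegrable (fun ψ => (c - ψ) * (α * v ^ α / ψ ^ (α + 1))) MeasureTheory.volume v c := by
    apply ContinuousOn.intervalIntegrable
    apply ContinuousOn.mul (by fun_prop)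
    apply ContinuousOn.div continuousOn_const
    · intro x hx
      rw [Set.uIcc_of_le hc] at hx
      exact (Real.continuousAt_rpow_const x _ (Or.inl (lt_of_lt_of_le hv hx.1).ne')).continuousWithinAt
    · intro x hx
      rw [Set.uIcc_of_le hc] at hx
      exact (Real.rpow_pos_of_pos (lt_of_lt_of_le hv hx.1) _).ne'
  rw [intervalIntegral.integral_eq_sub_of_hasDerivAt key hint]
  have hvα : (0:ℝ) < v ^ α := Real.rpow_pos_of_pos hv _
  have e4 : c * (v ^ α * c ^ (-α)) = v ^ α * c ^ (1 - α) := by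
    rw [show (1:ℝ) - α = 1 + -α by ring, Real.rpow_add hc0, Real.rpow_one]; ring
  have e5 : v ^ α * v ^ (-α) = 1 := by
    rw [← Real.rpow_add hv]; simp
  have e6 : v ^ α * v ^ (1 - α) = v := by
    rw [← Real.rpow_add hv]; simp
  have h1α : (1:ℝ) - α ≠ 0 := by nlinarith
  have hα1 : (α:ℝ) - 1 ≠ 0 := by nlinarith
  simp only [hF]
  rw [mul_assoc c, e4, mul_assoc c, e5, show α * v ^ α * v ^ (1 - α) = α * v from by rw [mul_assoc, e6]]
  field_simp
  ring

lemma min_le_aux (α i x y : ℝ) (hα : 1 < α) (hi : 0 < i) (hx : 0 < x) (hy : 0 < y) :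
    i * x ^ α / (α - 1) * x ^ (1 - α) + i * x ≤ i * x ^ α / (α - 1) * y ^ (1 - α) + i * y := by
  have hm1 : (0:ℝ) < α - 1 := by linarith
  have e1 : x ^ α * x ^ (1 - α) = x := by rw [← Real.rpow_add hx]; norm_num
  have ht : 0 < y / x := div_pos hy hx
  have h := bern α (y/x) hα ht
  have e2 : x * (y/x) ^ (1-α) = x ^ α * y ^ (1-α) := by
    rw [div_eq_mul_inv, Real.mul_rpow hy.le (by positivity), Real.inv_rpow hx.le,
      ← Real.rpow_neg hx.le]
    rw [show x * (y ^ (1-α) * x ^ (-(1-α))) = (x * x ^ (-(1-α))) * y ^ (1-α) by ring]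
    congr 1
    nth_rewrite 1 [← Real.rpow_one x]
    rw [← Real.rpow_add hx]
    ring_nf
  have e3 : x * ((α-1) * (y/x)) = (α-1) * y := by field_simp
  have h2 := mul_le_mul_of_nonneg_left h (by positivity : (0:ℝ) ≤ i * x)
  have e2' : i * (x * (y/x) ^ (1-α)) = i * (x ^ α * y ^ (1-α)) := by rw [e2]
  have e3' : i * (x * ((α-1) * (y/x))) = i * ((α-1) * y) := by rw [e3]
  have h3 : i * x * α ≤ i * (x^α * y^(1-α)) + i * ((α-1) * y) := by nlinarith [h2, e2', e3']
  rw [← sub_nonneg]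
  have expand : i*x^α/(α-1)*y^(1-α) + i*y - (i*x^α/(α-1)*x^(1-α) + i*x)
      = (i*(x^α*y^(1-α)) + i*((α-1)*y) - i*x*α) / (α-1) := by
    rw [show i*x^α/(α-1)*x^(1-α) = i*(x^α*x^(1-α))/(α-1) by ring, e1]; field_simp; ring
  rw [expand]
  exact div_nonneg (by linarith) hm1.le

/-- Billing cost for Pareto-distributed aggregate query volume with shape α > 2,
scale v = ((α−1)/α)·rn: for c ≥ v,
B(c) = rn·(g+p) − p·c + (i+p)·∫_v^c (c−ψ)·α·vᵃ/ψ^{α+1} dψ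
     = (g−i)·rn + (i+p)·((α−1)^{α−1}/αᵃ)·(rn)ᵃ·c^{1−α} + i·c,
minimized over c ≥ v at c* = ((i+p)/i)^{1/α}·((α−1)/α)·rn with minimum value
[g − i + i·((i+p)/i)^{1/α}]·rn. -/
theorem pareto_billing_cost (α r n g i p : ℝ) (hα : 2 < α) (hr : 0 < r) (hn : 0 < n)
    (hg : 0 ≤ g) (hi : 0 < i) (hp : 0 < p)
    (B : ℝ → ℝ)
    (hB : ∀ c, B c = r * n * (g + p) - p * c +
        (i + p) * ∫ ψ in (((α - 1) / α) * (r * n))..c,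
          (c - ψ) * (α * (((α - 1) / α) * (r * n)) ^ α / ψ ^ (α + 1))) :
    (∀ c, ((α - 1) / α) * (r * n) ≤ c →
        B c = (g - i) * (r * n) +
          (i + p) * ((α - 1) ^ (α - 1) / α ^ α) * (r * n) ^ α * c ^ (1 - α) + i * c) ∧
      ((α - 1) / α) * (r * n) ≤ ((i + p) / i) ^ (1 / α) * ((α - 1) / α) * (r * n) ∧
      (∀ c, ((α - 1) / α) * (r * n) ≤ c →
        B (((i + p) / i) ^ (1 / α) * ((α - 1) / α) * (r * n)) ≤ B c) ∧
      B (((i + p) / i) ^ (1 / α) * ((α - 1) / α) * (r * n)) =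
        (g - i + i * ((i + p) / i) ^ (1 / α)) * (r * n) := by
  have hα1 : (1:ℝ) < α := by linarith
  have hα0 : (0:ℝ) < α := by linarith
  have hm1 : (0:ℝ) < α - 1 := by linarith
  have hrn : (0:ℝ) < r * n := mul_pos hr hn
  have hfr : (0:ℝ) < (α - 1) / α := div_pos hm1 hα0
  set v : ℝ := (α - 1) / α * (r * n) with hvdef
  have hv : (0:ℝ) < v := mul_pos hfr hrn
  have hvα : v ^ α = (α - 1) ^ (α - 1) / α ^ α * (r * n) ^ α * (α - 1) := by
    rw [hvdef, Real.mul_rpow hfr.le hrn.le, Real.div_rpow (by linarith) hα0.le]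
    have e3 : (α - 1) ^ α = (α - 1) ^ (α - 1) * (α - 1) := by
      rw [← Real.rpow_add_one hm1.ne']
      norm_num
    rw [e3]; ring
  have hclosed : ∀ c, v ≤ c → B c = (g - i) * (r * n) +
      (i + p) * ((α - 1) ^ (α - 1) / α ^ α) * (r * n) ^ α * c ^ (1 - α) + i * c := by
    intro c hc
    rw [hB c, pareto_integral α v c hα1 hv hc, hvα]
    simp only [hvdef]
    field_simp
    ring
  set q : ℝ := ((i + p) / i) ^ (1 / α) with hqdef
  have hip : (1:ℝ) ≤ (i + p) / i := by rw [le_div_iff₀ hi]; linarith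
  have hq1 : (1:ℝ) ≤ q := Real.one_le_rpow hip (by positivity)
  have hqpos : (0:ℝ) < q := lt_of_lt_of_le one_pos hq1
  have hxeq : q * ((α - 1) / α) * (r * n) = q * v := by rw [hvdef]; ring
  have hcsv : v ≤ q * ((α - 1) / α) * (r * n) := by
    rw [hxeq]
    exact le_mul_of_one_le_left hv.le hq1
  have hx : (0:ℝ) < q * v := mul_pos hqpos hv
  have hqα : q ^ α = (i + p) / i := by
    rw [hqdef, ← Real.rpow_mul (by positivity), one_div, inv_mul_cancel₀ hα0.ne',
      Real.rpow_one]
  have hxα : (q * v) ^ α = (i + p) / i * v ^ α := by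
    rw [Real.mul_rpow hqpos.le hv.le, hqα]
  have hK : (i + p) * ((α - 1) ^ (α - 1) / α ^ α) * (r * n) ^ α = i * (q * v) ^ α / (α - 1) := by
    rw [hxα, hvα]
    field_simp
  refine ⟨hclosed, hcsv, ?_, ?_⟩
  · intro c hc
    rw [hclosed c hc, hclosed _ hcsv, hxeq, hK]
    have := min_le_aux α i (q * v) c hα1 hi hx (lt_of_lt_of_le hv hc)
    linarith
  · rw [hclosed _ hcsv, hxeq, hK]
    have hxx : (q * v) ^ α * (q * v) ^ (1 - α) = q * v := by
      rw [← Real.rpow_add hx]; norm_num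
    rw [show i * (q*v) ^ α / (α-1) * (q*v) ^ (1-α) = i * ((q*v) ^ α * (q*v) ^ (1-α)) / (α-1) by ring,
      hxx, hvdef]
    field_simp
    ring
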